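/- Let d ≥ 2 and N ≥ 1 be integers, let I₁, I₂, I₃ be three pairwise disjoint aligned arcs of level N in 𝕋 = ℝ/ℤ, and let A₀ = I₁ ∪ I₂ ∪ I₃. Let g : 𝕋 → 𝕋 be multiplication by d. Then for every n ≥ 0, the set 𝕋 \ g^{-n}(A₀) is a union of 3·d^n pairwise disjoint closed arcs (possibly degenerate to points), each of length strictly less than d^{-n}. -/

import Mathlib

open Set

noncomputable section

/-- The aligned arc of level `n` with index `j` in the circle `ℝ/ℤ`:
the image of the open interval `(j/d^n, (j+1)/d^n) ⊂ ℝ`. -/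
def alignedArc (d n : ℕ) (j : ℤ) : Set UnitAddCircle :=
  (fun x : ℝ => (x : UnitAddCircle)) ''
    Set.Ioo ((j : ℝ) / (d : ℝ) ^ n) (((j : ℝ) + 1) / (d : ℝ) ^ n)

/-- `I` is an aligned arc of level `n` (with respect to the base `d`). -/
def IsAlignedArc (d n : ℕ) (I : Set UnitAddCircle) : Prop :=
  ∃ j : ℤ, I = alignedArc d n j

/-- Multiplication by `d` on the circle `ℝ/ℤ`. -/
def mulMap (d : ℕ) : UnitAddCircle → UnitAddCircle := fun x => d • x

/-- The set of connected components of a subset of the circle. -/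
def componentsOf (S : Set UnitAddCircle) : Set (Set UnitAddCircle) :=
  {C | ∃ x ∈ S, C = connectedComponentIn S x}

/-- All connected components of the preimages `g⁻¹(I)`, `I ∈ F`, where `g = mulMap d`. -/
def compFamily (d : ℕ) (F : Set (Set UnitAddCircle)) : Set (Set UnitAddCircle) :=
  ⋃ I ∈ F, componentsOf (mulMap d ⁻¹' I)

/-- The closed arc in `ℝ/ℤ` that is the image of the closed interval `[a, a + ℓ] ⊂ ℝ`
(a closed arc of length `ℓ`, degenerate to a point if `ℓ = 0`). -/
def closedArc (a ℓ : ℝ) : Set UnitAddCircle :=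
  (fun x : ℝ => (x : UnitAddCircle)) '' Set.Icc a (a + ℓ)

lemma coe_eq_coe_iff' (x y : ℝ) :
    (x : UnitAddCircle) = (y : UnitAddCircle) ↔ ∃ t : ℤ, y = x + t := by
  rw [QuotientAddGroup.eq_iff_sub_mem]
  constructor
  · rintro h
    rw [AddSubgroup.mem_zmultiples_iff] at h
    obtain ⟨k, hk⟩ := h
    rw [zsmul_eq_mul, mul_one] at hk
    exact ⟨-k, by push_cast; linarith⟩
  · rintro ⟨t, rfl⟩
    rw [AddSubgroup.mem_zmultiples_iff]
    exact ⟨-t, by rw [zsmul_eq_mul, mul_one]; push_cast; ring⟩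

lemma preimage_coe_image (S : Set ℝ) :
    (fun x : ℝ => (x : UnitAddCircle)) ⁻¹' ((fun x : ℝ => (x : UnitAddCircle)) '' S) =
      ⋃ t : ℤ, (fun x => x + (t : ℝ)) '' S := by
  ext y
  simp only [mem_preimage, mem_image, mem_iUnion]
  constructor
  · rintro ⟨x, hx, hxy⟩
    obtain ⟨t, ht⟩ := (coe_eq_coe_iff' x y).mp hxy
    exact ⟨t, x, hx, ht.symm⟩
  · rintro ⟨t, x, hx, rfl⟩
    exact ⟨x, hx, ((coe_eq_coe_iff' x _).mpr ⟨t, rfl⟩)⟩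

lemma mulMap_iterate (d n : ℕ) (x : ℝ) :
    (mulMap d)^[n] (x : UnitAddCircle) = (((d : ℝ) ^ n * x : ℝ) : UnitAddCircle) := by
  induction n with
  | zero => simp
  | succ n ih =>
      rw [Function.iterate_succ_apply', ih, mulMap]
      rw [← AddCircle.coe_nsmul]
      congr 1
      simp [nsmul_eq_mul]
      ring

lemma preimage_iterate (d n : ℕ) (A : Set UnitAddCircle) :
    (fun x : ℝ => (x : UnitAddCircle)) ⁻¹' ((mulMap d)^[n] ⁻¹' A) =
      (fun x : ℝ => (d : ℝ) ^ n * x) ⁻¹' ((fun x : ℝ => (x : UnitAddCircle)) ⁻¹' A) := by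
  ext x
  simp [mem_preimage, mulMap_iterate]

lemma coe_image_add (t : ℤ) (S : Set ℝ) :
    (fun x : ℝ => (x : UnitAddCircle)) '' ((fun x => x + (t : ℝ)) '' S) =
      (fun x : ℝ => (x : UnitAddCircle)) '' S := by
  rw [← Set.image_comp]
  apply Set.image_congr
  intro x _
  exact ((coe_eq_coe_iff' (x + t) x).mpr ⟨-t, by push_cast; ring⟩)

lemma alignedArc_add (d n : ℕ) (hd : 1 ≤ d) (j t : ℤ) :
    alignedArc d n (j + d ^ n * t) = alignedArc d n j := by
  have hP : (0:ℝ) < (d:ℝ) ^ n := by positivity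
  unfold alignedArc
  rw [← coe_image_add t (Set.Ioo ((j : ℝ) / (d : ℝ) ^ n) (((j : ℝ) + 1) / (d : ℝ) ^ n))]
  rw [Set.image_add_const_Ioo]
  congr 1 <;> field_simp <;> push_cast <;> ring

lemma alignedArc_emod (d n : ℕ) (hd : 1 ≤ d) (j : ℤ) :
    alignedArc d n j = alignedArc d n (j % (d ^ n : ℕ)) := by
  conv_lhs => rw [show j = j % (d ^ n : ℕ) + (d ^ n : ℕ) * (j / (d ^ n : ℕ)) from
    (Int.emod_add_mul_ediv j _).symm]
  rw [show ((d ^ n : ℕ) : ℤ) = (d : ℤ) ^ n from by push_cast; ring]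
  exact alignedArc_add d n hd _ _

lemma alignedArc_nonempty (d n : ℕ) (hd : 1 ≤ d) (j : ℤ) : (alignedArc d n j).Nonempty := by
  have hP : (0:ℝ) < (d:ℝ) ^ n := by positivity
  apply Set.Nonempty.image
  rw [Set.nonempty_Ioo]
  gcongr ?_ / _
  linarith

lemma vbound (P s v : ℤ) (hP : 0 < P) (hs0 : 0 ≤ s) (hsP : s < P)
    (hl : 0 < s + v * P) (hr : s + v * P < 2 * P) : v = 0 ∨ v = 1 := by
  by_contra hv
  push_neg at hv
  rcases lt_or_ge v 0 with h | h
  · have h' : v ≤ -1 := by omega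
    have := mul_le_mul_of_nonneg_right h' hP.le
    linarith
  · have h' : 2 ≤ v := by omega
    have := mul_le_mul_of_nonneg_right h' hP.le
    linarith

lemma disj_aux (P s lo hi u u' : ℤ) (y : ℝ) (hP : 0 < P) (hs0 : 0 ≤ s) (hsP : s < P)
    (hlo : 1 ≤ lo) (hhi : hi ≤ P + P - 1)
    (hIcc1 : ((lo + u' * P : ℤ) : ℝ) ≤ y) (hIcc2 : y ≤ ((hi + u' * P : ℤ) : ℝ))
    (hIoo1 : ((s + u * P : ℤ) : ℝ) < y) (hIoo2 : y < ((s + u * P + 1 : ℤ) : ℝ)) :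
    (lo ≤ s ∧ s + 1 ≤ hi) ∨ (lo ≤ s + P ∧ s + P + 1 ≤ hi) := by
  have A : lo + u' * P ≤ s + u * P := by
    have h : ((lo + u' * P : ℤ) : ℝ) < ((s + u * P + 1 : ℤ) : ℝ) := lt_of_le_of_lt hIcc1 hIoo2
    have h' : (lo + u' * P : ℤ) < s + u * P + 1 := by exact_mod_cast h
    omega
  have B : s + u * P + 1 ≤ hi + u' * P := by
    have h : ((s + u * P : ℤ) : ℝ) < ((hi + u' * P : ℤ) : ℝ) := lt_of_lt_of_le hIoo1 hIcc2
    have h' : (s + u * P : ℤ) < hi + u' * P := by exact_mod_cast h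
    omega
  have hring : (u - u') * P = u * P - u' * P := by ring
  have hA : lo ≤ s + (u - u') * P := by linarith
  have hB : s + (u - u') * P + 1 ≤ hi := by linarith
  rcases vbound P s (u - u') hP hs0 hsP (by linarith) (by linarith) with h | h
  · rw [h, zero_mul] at hA hB; left; omega
  · rw [h, one_mul] at hA hB; right; omega

lemma core (s₁ s₂ s₃ P : ℤ) (h1 : 0 ≤ s₁) (h12 : s₁ < s₂) (h23 : s₂ < s₃) (h3 : s₃ < P) (y : ℝ) :
    (∃ u : ℤ, y ∈ Icc ((s₁ + u * P + 1 : ℤ) : ℝ) ((s₂ + u * P : ℤ) : ℝ) ∨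
              y ∈ Icc ((s₂ + u * P + 1 : ℤ) : ℝ) ((s₃ + u * P : ℤ) : ℝ) ∨
              y ∈ Icc ((s₃ + u * P + 1 : ℤ) : ℝ) ((s₁ + (u + 1) * P : ℤ) : ℝ)) ↔
    (∀ u : ℤ, y ∉ Ioo ((s₁ + u * P : ℤ) : ℝ) ((s₁ + u * P + 1 : ℤ) : ℝ) ∧
              y ∉ Ioo ((s₂ + u * P : ℤ) : ℝ) ((s₂ + u * P + 1 : ℤ) : ℝ) ∧
              y ∉ Ioo ((s₃ + u * P : ℤ) : ℝ) ((s₃ + u * P + 1 : ℤ) : ℝ)) := by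
  have hP : (0 : ℤ) < P := by omega
  have hPr : (0 : ℝ) < (P : ℝ) := by exact_mod_cast hP
  constructor
  · rintro ⟨u', hcase⟩ u
    rcases hcase with hm | hm | hm
    · obtain ⟨ha, hb⟩ := hm
      refine ⟨fun hIoo => ?_, fun hIoo => ?_, fun hIoo => ?_⟩ <;>
        rcases disj_aux P _ (s₁ + 1) s₂ u u' y hP (by omega) (by omega) (by omega) (by omega)
          (by refine le_trans (le_of_eq ?_) ha; push_cast; ring) hb hIoo.1 hIoo.2 with ⟨hA, hB⟩ | ⟨hA, hB⟩ <;> omega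
    · obtain ⟨ha, hb⟩ := hm
      refine ⟨fun hIoo => ?_, fun hIoo => ?_, fun hIoo => ?_⟩ <;>
        rcases disj_aux P _ (s₂ + 1) s₃ u u' y hP (by omega) (by omega) (by omega) (by omega)
          (by refine le_trans (le_of_eq ?_) ha; push_cast; ring) hb hIoo.1 hIoo.2 with ⟨hA, hB⟩ | ⟨hA, hB⟩ <;> omega
    · obtain ⟨ha, hb⟩ := hm
      have hb' : y ≤ (((s₁ + P) + u' * P : ℤ) : ℝ) := by refine le_trans hb (le_of_eq ?_); push_cast; ring
      refine ⟨fun hIoo => ?_, fun hIoo => ?_, fun hIoo => ?_⟩ <;>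
        rcases disj_aux P _ (s₃ + 1) (s₁ + P) u u' y hP (by omega) (by omega) (by omega) (by omega)
          (by refine le_trans (le_of_eq ?_) ha; push_cast; ring) hb' hIoo.1 hIoo.2 with ⟨hA, hB⟩ | ⟨hA, hB⟩ <;> omega
  · intro h
    set u : ℤ := ⌊(y - s₁) / P⌋ with hu
    have hl : ((s₁ : ℝ) + u * P) ≤ y := by
      have := Int.floor_le ((y - s₁) / P)
      rw [← hu] at this
      have := (le_div_iff₀ hPr).mp this
      linarith
    have hr : y < (s₁ : ℝ) + (u + 1) * P := by
      have := Int.lt_floor_add_one ((y - s₁) / P)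
      rw [← hu] at this
      have := (div_lt_iff₀ hPr).mp this
      push_cast
      linarith
    have c12 : (s₁ : ℝ) + 1 ≤ s₂ := by exact_mod_cast h12
    have c23 : (s₂ : ℝ) + 1 ≤ s₃ := by exact_mod_cast h23
    have c3 : (s₃ : ℝ) + 1 ≤ P := by exact_mod_cast h3
    have c1 : (0 : ℝ) ≤ s₁ := by exact_mod_cast h1
    by_cases hc1 : y ≤ (s₁ : ℝ) + u * P
    · exact ⟨u - 1, Or.inr (Or.inr ⟨by push_cast; linarith, by push_cast; linarith⟩)⟩
    push_neg at hc1
    by_cases hc2 : y < (s₁ : ℝ) + u * P + 1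
    · exact absurd ⟨by push_cast; linarith, by push_cast; linarith⟩ (h u).1
    push_neg at hc2
    by_cases hc3 : y ≤ (s₂ : ℝ) + u * P
    · exact ⟨u, Or.inl ⟨by push_cast; linarith, by push_cast; linarith⟩⟩
    push_neg at hc3
    by_cases hc4 : y < (s₂ : ℝ) + u * P + 1
    · exact absurd ⟨by push_cast; linarith, by push_cast; linarith⟩ (h u).2.1
    push_neg at hc4
    by_cases hc5 : y ≤ (s₃ : ℝ) + u * P
    · exact ⟨u, Or.inr (Or.inl ⟨by push_cast; linarith, by push_cast; linarith⟩)⟩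
    push_neg at hc5
    by_cases hc6 : y < (s₃ : ℝ) + u * P + 1
    · exact absurd ⟨by push_cast; linarith, by push_cast; linarith⟩ (h u).2.2
    push_neg at hc6
    exact ⟨u, Or.inr (Or.inr ⟨by push_cast; linarith, by push_cast; linarith⟩)⟩

def SS (s₁ s₂ s₃ : ℤ) : ℕ → ℤ := fun r => if r = 0 then s₁ else if r = 1 then s₂ else s₃
def NX (s₁ s₂ s₃ P : ℤ) : ℕ → ℤ := fun r => if r = 0 then s₂ else if r = 1 then s₃ else s₁ + P

lemma no_overlap (P a b a' b' v : ℤ) (hP : 0 < P) (ha : 1 ≤ a) (hb : b ≤ 2 * P - 1)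
    (ha' : 1 ≤ a') (hb' : b' ≤ 2 * P - 1)
    (h1 : a + v * P ≤ b') (h2 : a' ≤ b + v * P) : v = -1 ∨ v = 0 ∨ v = 1 := by
  by_contra hv
  push_neg at hv
  rcases lt_or_ge v 0 with h | h
  · have h' : v ≤ -2 := by omega
    have := mul_le_mul_of_nonneg_right h' hP.le
    linarith
  · have h' : 2 ≤ v := by omega
    have := mul_le_mul_of_nonneg_right h' hP.le
    linarith

lemma Icc_pair_disj (s₁ s₂ s₃ P : ℤ) (h1 : 0 ≤ s₁) (h12 : s₁ < s₂) (h23 : s₂ < s₃)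
    (h3 : s₃ < P) (r r' : ℕ) (hr : r < 3) (hr' : r' < 3) (u u' : ℤ)
    (hne : ¬(r = r' ∧ u = u')) (x : ℝ)
    (hxa : ((SS s₁ s₂ s₃ r + 1 + u * P : ℤ) : ℝ) ≤ x)
    (hxb : x ≤ ((NX s₁ s₂ s₃ P r + u * P : ℤ) : ℝ))
    (hxa' : ((SS s₁ s₂ s₃ r' + 1 + u' * P : ℤ) : ℝ) ≤ x)
    (hxb' : x ≤ ((NX s₁ s₂ s₃ P r' + u' * P : ℤ) : ℝ)) : False := by
  have hP : (0 : ℤ) < P := by omega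
  have H1 : (SS s₁ s₂ s₃ r + 1 + u * P : ℤ) ≤ NX s₁ s₂ s₃ P r' + u' * P := by
    exact_mod_cast le_trans hxa hxb'
  have H2 : (SS s₁ s₂ s₃ r' + 1 + u' * P : ℤ) ≤ NX s₁ s₂ s₃ P r + u * P := by
    exact_mod_cast le_trans hxa' hxb
  have hS : ∀ t, t < 3 → 0 ≤ SS s₁ s₂ s₃ t ∧ NX s₁ s₂ s₃ P t ≤ 2 * P - 1 := by
    intro t ht
    interval_cases t <;> simp [SS, NX] <;> omega
  obtain ⟨hS0, hN0⟩ := hS r hr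
  obtain ⟨hS0', hN0'⟩ := hS r' hr'
  have hring : (u - u') * P = u * P - u' * P := by ring
  have h1' : SS s₁ s₂ s₃ r + 1 + (u - u') * P ≤ NX s₁ s₂ s₃ P r' := by linarith
  have h2' : SS s₁ s₂ s₃ r' + 1 ≤ NX s₁ s₂ s₃ P r + (u - u') * P := by linarith
  rcases no_overlap P _ _ _ _ (u - u') hP (by omega) hN0 (by omega) hN0' h1' h2' with hv | hv | hv
  · rw [hv] at h1' h2'
    interval_cases r <;> interval_cases r' <;> simp [SS, NX] at h1' h2' <;> omega
  · have huu : u = u' := by omega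
    have hne' : r ≠ r' := fun h => hne ⟨h, huu⟩
    rw [hv, zero_mul] at h1' h2'
    interval_cases r <;> interval_cases r' <;> simp [SS, NX] at h1' h2' <;> omega
  · rw [hv, one_mul] at h1' h2'
    interval_cases r <;> interval_cases r' <;> simp [SS, NX] at h1' h2' <;> omega

lemma mem_Ioo_div (p A B z : ℝ) (hp : 0 < p) : z ∈ Ioo (A / p) (B / p) ↔ p * z ∈ Ioo A B := by
  rw [mem_Ioo, mem_Ioo, div_lt_iff₀ hp, lt_div_iff₀ hp, mul_comm]

lemma mem_Icc_div (p A B z : ℝ) (hp : 0 < p) : z ∈ Icc (A / p) (B / p) ↔ p * z ∈ Icc A B := by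
  rw [mem_Icc, mem_Icc, div_le_iff₀ hp, le_div_iff₀ hp, mul_comm]

lemma tzero (Q t k k' : ℤ) (hQ : 0 < Q) (hk : 0 ≤ k) (hkQ : k < Q) (hk' : 0 ≤ k') (hk'Q : k' < Q)
    (h : k = k' - t * Q) : t = 0 := by
  by_contra ht
  rcases lt_or_ge t 0 with h' | h'
  · have : t ≤ -1 := by omega
    have := mul_le_mul_of_nonneg_right this hQ.le
    linarith
  · have : 1 ≤ t := by omega
    have := mul_le_mul_of_nonneg_right this hQ.le
    linarith


set_option maxHeartbeats 2000000 in
/-- for three pairwise disjoint aligned arcs of level `N` with union `A₀`,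
the set `𝕋 \ g⁻ⁿ(A₀)` is a union of `3·dⁿ` pairwise disjoint closed arcs (possibly
degenerate to points), each of length strictly less than `d⁻ⁿ`. -/
theorem compl_preimage_union_closedArcs (d N : ℕ) (hd : 2 ≤ d) (hN : 1 ≤ N)
    (I₁ I₂ I₃ : Set UnitAddCircle)
    (hI₁ : IsAlignedArc d N I₁) (hI₂ : IsAlignedArc d N I₂) (hI₃ : IsAlignedArc d N I₃)
    (hd₁₂ : Disjoint I₁ I₂) (hd₁₃ : Disjoint I₁ I₃) (hd₂₃ : Disjoint I₂ I₃)
    (n : ℕ) :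
    ∃ a ℓ : Fin (3 * d ^ n) → ℝ,
      (∀ i, 0 ≤ ℓ i) ∧
      (∀ i, ℓ i < ((d : ℝ) ^ n)⁻¹) ∧
      Pairwise (Function.onFun Disjoint fun i => closedArc (a i) (ℓ i)) ∧
      ((mulMap d)^[n] ⁻¹' (I₁ ∪ I₂ ∪ I₃))ᶜ = ⋃ i, closedArc (a i) (ℓ i) := by
  have hd1 : 1 ≤ d := by omega
  set P : ℤ := ((d ^ N : ℕ) : ℤ) with hPdef
  have hPpos : 0 < P := by positivity
  obtain ⟨j₁, hj₁⟩ := hI₁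
  obtain ⟨j₂, hj₂⟩ := hI₂
  obtain ⟨j₃, hj₃⟩ := hI₃
  have e₁ : I₁ = alignedArc d N (j₁ % P) := by rw [hj₁]; exact alignedArc_emod d N hd1 j₁
  have e₂ : I₂ = alignedArc d N (j₂ % P) := by rw [hj₂]; exact alignedArc_emod d N hd1 j₂
  have e₃ : I₃ = alignedArc d N (j₃ % P) := by rw [hj₃]; exact alignedArc_emod d N hd1 j₃
  have hb : ∀ j : ℤ, 0 ≤ j % P ∧ j % P < P :=
    fun j => ⟨Int.emod_nonneg j (by omega), Int.emod_lt_of_pos j hPpos⟩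
  have hne : ∀ (A B : Set UnitAddCircle) (ja jb : ℤ), Disjoint A B →
      A = alignedArc d N (ja % P) → B = alignedArc d N (jb % P) → ja % P ≠ jb % P := by
    intro A B ja jb hAB hA hB h
    obtain ⟨x, hx⟩ := alignedArc_nonempty d N hd1 (ja % P)
    have hx1 : x ∈ A := by rw [hA]; exact hx
    have hx2 : x ∈ B := by rw [hB, ← h]; exact hx
    exact Set.disjoint_left.mp hAB hx1 hx2
  have hne12 := hne I₁ I₂ j₁ j₂ hd₁₂ e₁ e₂
  have hne13 := hne I₁ I₃ j₁ j₃ hd₁₃ e₁ e₃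
  have hne23 := hne I₂ I₃ j₂ j₃ hd₂₃ e₂ e₃
  obtain ⟨s₁, s₂, s₃, h12, h23, h1, h3, hUnion⟩ :
      ∃ s₁ s₂ s₃ : ℤ, s₁ < s₂ ∧ s₂ < s₃ ∧ 0 ≤ s₁ ∧ s₃ < P ∧
        I₁ ∪ I₂ ∪ I₃ = alignedArc d N s₁ ∪ alignedArc d N s₂ ∪ alignedArc d N s₃ := by
    rw [e₁, e₂, e₃]
    obtain ⟨hb1a, hb1b⟩ := hb j₁
    obtain ⟨hb2a, hb2b⟩ := hb j₂
    obtain ⟨hb3a, hb3b⟩ := hb j₃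
    rcases lt_trichotomy (j₁ % P) (j₂ % P) with h | h | h
    · rcases lt_trichotomy (j₃ % P) (j₁ % P) with h' | h' | h'
      · exact ⟨_, _, _, h', h, by omega, by omega, by ext x; simp only [Set.mem_union]; try tauto⟩
      · exact absurd h'.symm (hne13 )
      · rcases lt_trichotomy (j₃ % P) (j₂ % P) with h'' | h'' | h''
        · exact ⟨_, _, _, h', h'', by omega, by omega,
            by ext x; simp only [Set.mem_union]; try tauto⟩
        · exact absurd h''.symm hne23
        · exact ⟨_, _, _, h, h'', by omega, by omega,
            by ext x; simp only [Set.mem_union]; try tauto⟩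
    · exact absurd h hne12
    · rcases lt_trichotomy (j₃ % P) (j₂ % P) with h' | h' | h'
      · exact ⟨_, _, _, h', h, by omega, by omega, by ext x; simp only [Set.mem_union]; try tauto⟩
      · exact absurd h'.symm hne23
      · rcases lt_trichotomy (j₃ % P) (j₁ % P) with h'' | h'' | h''
        · exact ⟨_, _, _, h', h'', by omega, by omega,
            by ext x; simp only [Set.mem_union]; try tauto⟩
        · exact absurd h''.symm hne13
        · exact ⟨_, _, _, h, h'', by omega, by omega,
            by ext x; simp only [Set.mem_union]; try tauto⟩
  -- continue
  clear hne12 hne13 hne23 hne e₁ e₂ e₃ hj₁ hj₂ hj₃ hd₁₂ hd₁₃ hd₂₃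
  set Q : ℤ := ((d ^ n : ℕ) : ℤ) with hQdef
  have hQpos : 0 < Q := by positivity
  set M : ℝ := (d : ℝ) ^ N * (d : ℝ) ^ n with hMdef
  have hM : (0:ℝ) < M := by positivity
  have hMQ : M = ((P * Q : ℤ) : ℝ) := by rw [hMdef, hPdef, hQdef]; push_cast; ring
  have hp : (0:ℝ) < (d:ℝ)^N := by positivity
  have hPr : ((P : ℤ) : ℝ) = (d:ℝ)^N := by rw [hPdef]; push_cast; ring
  set AA : Fin (3 * d ^ n) → ℤ :=
    fun i => SS s₁ s₂ s₃ (i.val % 3) + 1 + ((i.val / 3 : ℕ) : ℤ) * P with hAA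
  set BB : Fin (3 * d ^ n) → ℤ :=
    fun i => NX s₁ s₂ s₃ P (i.val % 3) + ((i.val / 3 : ℕ) : ℤ) * P with hBB
  have hgap : ∀ i : Fin (3 * d ^ n), 0 ≤ BB i - AA i ∧ BB i - AA i < P := by
    intro i
    have hr : i.val % 3 < 3 := Nat.mod_lt _ (by norm_num)
    rw [hAA, hBB]
    simp only
    have : NX s₁ s₂ s₃ P (i.val % 3) - SS s₁ s₂ s₃ (i.val % 3) - 1 ≥ 0 ∧
        NX s₁ s₂ s₃ P (i.val % 3) - SS s₁ s₂ s₃ (i.val % 3) - 1 < P := by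
      set r := i.val % 3 with hrr
      interval_cases r <;> simp [SS, NX] <;> omega
    omega
  refine ⟨fun i => ((AA i : ℤ) : ℝ) / M, fun i => ((BB i - AA i : ℤ) : ℝ) / M, ?_, ?_, ?_, ?_⟩
  · intro i
    apply div_nonneg _ hM.le
    exact_mod_cast (hgap i).1
  · intro i
    have hlt : ((BB i - AA i : ℤ) : ℝ) < ((P : ℤ) : ℝ) := by exact_mod_cast (hgap i).2
    have hinv : ((d:ℝ)^n)⁻¹ = ((P : ℤ) : ℝ) / M := by
      rw [hPr, hMdef]; field_simp
    rw [hinv]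
    exact (div_lt_div_iff_of_pos_right hM).mpr hlt
  · -- pairwise disjoint
    intro i j hij
    rw [Function.onFun, Set.disjoint_left]
    intro z hzi hzj
    obtain ⟨y, hy, hyz⟩ := hzi
    obtain ⟨y', hy', hy'z⟩ := hzj
    obtain ⟨t, rfl⟩ := (coe_eq_coe_iff' y y').mp (hyz.trans hy'z.symm)
    have hup : ∀ k : Fin (3 * d ^ n),
        ((AA k : ℤ) : ℝ)/M + ((BB k - AA k : ℤ) : ℝ)/M = ((BB k : ℤ) : ℝ)/M := by
      intro k; rw [← add_div]; congr 1; push_cast; ring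
    rw [hup] at hy hy'
    rw [mem_Icc_div _ _ _ _ hM] at hy hy'
    have hMt : M * (t:ℝ) = ((t * (P * Q) : ℤ) : ℝ) := by rw [hMQ]; push_cast; ring
    have hexp : M * (y + (t:ℝ)) = M * y + ((t * (P * Q) : ℤ) : ℝ) := by rw [← hMt]; ring
    rw [hexp] at hy'
    have hy'1 : ((AA j - t * (P * Q) : ℤ) : ℝ) ≤ M * y := by
      have := hy'.1; push_cast at this ⊢; linarith
    have hy'2 : M * y ≤ ((BB j - t * (P * Q) : ℤ) : ℝ) := by
      have := hy'.2; push_cast at this ⊢; linarith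
    have hki : 0 ≤ ((i.val / 3 : ℕ) : ℤ) ∧ ((i.val / 3 : ℕ) : ℤ) < Q := by
      constructor
      · positivity
      · rw [hQdef]; have := i.isLt; exact_mod_cast (by omega : i.val / 3 < d ^ n)
    have hkj : 0 ≤ ((j.val / 3 : ℕ) : ℤ) ∧ ((j.val / 3 : ℕ) : ℤ) < Q := by
      constructor
      · positivity
      · rw [hQdef]; have := j.isLt; exact_mod_cast (by omega : j.val / 3 < d ^ n)
    refine Icc_pair_disj s₁ s₂ s₃ P h1 h12 h23 h3 (i.val % 3) (j.val % 3)
      (Nat.mod_lt _ (by norm_num)) (Nat.mod_lt _ (by norm_num))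
      ((i.val / 3 : ℕ) : ℤ) (((j.val / 3 : ℕ) : ℤ) - t * Q) ?_ (M * y) ?_ ?_ ?_ ?_
    · rintro ⟨hr, hk⟩
      have ht0 : t = 0 := tzero Q t _ _ hQpos hki.1 hki.2 hkj.1 hkj.2 hk
      rw [ht0] at hk
      simp at hk
      have : i.val = j.val := by omega
      exact hij (Fin.ext this)
    · exact hy.1
    · exact hy.2
    · convert hy'1 using 2
      rw [hAA]; push_cast; ring
    · convert hy'2 using 2
      rw [hBB]; push_cast; ring
  · -- the set equality
    have hsurj : Function.Surjective (fun x : ℝ => (x : UnitAddCircle)) :=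
      fun z => QuotientAddGroup.mk_surjective z
    have he : ∀ (A t : ℤ), ((A:ℤ):ℝ)/(d:ℝ)^N + (t:ℝ) = ((A + t * P : ℤ) : ℝ)/(d:ℝ)^N := by
      intro A t
      rw [div_add' _ _ _ hp.ne']
      congr 1
      rw [hPdef]; push_cast; ring
    have harc_pre : ∀ s : ℤ, (fun x : ℝ => (x : UnitAddCircle)) ⁻¹' alignedArc d N s =
        ⋃ t : ℤ, Ioo (((s + t * P : ℤ) : ℝ) / (d:ℝ)^N) (((s + t * P + 1 : ℤ) : ℝ) / (d:ℝ)^N) := by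
      intro s
      rw [show alignedArc d N s = (fun x : ℝ => (x : UnitAddCircle)) ''
          Ioo (((s:ℤ):ℝ)/(d:ℝ)^N) (((s + 1 :ℤ):ℝ)/(d:ℝ)^N) from by
        unfold alignedArc; push_cast; rfl]
      rw [preimage_coe_image]
      refine iUnion_congr fun t => ?_
      rw [Set.image_add_const_Ioo, he s t, he (s+1) t,
        show (s + 1 + t*P : ℤ) = s + t*P + 1 from by ring]
    have hclosed_pre : ∀ aa ll : ℝ, (fun x : ℝ => (x : UnitAddCircle)) ⁻¹' closedArc aa ll =
        ⋃ t : ℤ, Icc (aa + (t:ℝ)) (aa + ll + (t:ℝ)) := by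
      intro aa ll
      rw [show closedArc aa ll = (fun x : ℝ => (x : UnitAddCircle)) '' Icc aa (aa + ll) from rfl,
        preimage_coe_image]
      exact iUnion_congr fun t => by rw [Set.image_add_const_Icc]
    apply hsurj.preimage_injective
    rw [Set.preimage_compl, preimage_iterate, hUnion]
    simp only [Set.preimage_union, harc_pre, Set.preimage_iUnion, hclosed_pre]
    have hSS0 : SS s₁ s₂ s₃ 0 = s₁ := by simp [SS]
    have hSS1 : SS s₁ s₂ s₃ 1 = s₂ := by simp [SS]
    have hSS2 : SS s₁ s₂ s₃ 2 = s₃ := by simp [SS]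
    have hNX0 : NX s₁ s₂ s₃ P 0 = s₂ := by simp [NX]
    have hNX1 : NX s₁ s₂ s₃ P 1 = s₃ := by simp [NX]
    have hNX2 : NX s₁ s₂ s₃ P 2 = s₁ + P := by simp [NX]
    ext x
    simp only [mem_compl_iff, mem_preimage, mem_union, mem_iUnion]
    have hcore := core s₁ s₂ s₃ P h1 h12 h23 h3 (M * x)
    have hIooiff : ∀ (s u : ℤ),
        ((d:ℝ)^n * x ∈ Ioo (((s + u*P : ℤ):ℝ)/(d:ℝ)^N) (((s + u*P + 1 : ℤ):ℝ)/(d:ℝ)^N)) ↔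
        M*x ∈ Ioo ((s + u*P : ℤ):ℝ) ((s + u*P + 1 : ℤ):ℝ) := by
      intro s u
      rw [mem_Ioo_div _ _ _ _ hp, hMdef, mul_assoc]
    have hmemIcc : ∀ (i : Fin (3 * d ^ n)) (t : ℤ),
        (x ∈ Icc (((AA i : ℤ):ℝ)/M + (t:ℝ)) (((AA i : ℤ):ℝ)/M + ((BB i - AA i : ℤ):ℝ)/M + (t:ℝ))) ↔
        M*x ∈ Icc ((AA i + t*(P*Q) : ℤ):ℝ) ((BB i + t*(P*Q) : ℤ):ℝ) := by
      intro i t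
      have e2 : ((AA i : ℤ):ℝ)/M + ((BB i - AA i : ℤ):ℝ)/M = ((BB i : ℤ):ℝ)/M := by
        rw [← add_div]; congr 1; push_cast; ring
      have e3 : ∀ C : ℤ, ((C : ℤ):ℝ)/M + (t:ℝ) = ((C + t*(P*Q) : ℤ):ℝ)/M := by
        intro C
        rw [div_add' _ _ _ hM.ne']
        congr 1
        rw [hMQ]; push_cast; ring
      rw [e2, e3, e3, mem_Icc_div _ _ _ _ hM]
    constructor
    · intro hx
      have hall : ∀ u : ℤ,
          M*x ∉ Ioo ((s₁ + u*P : ℤ):ℝ) ((s₁ + u*P + 1 : ℤ):ℝ) ∧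
          M*x ∉ Ioo ((s₂ + u*P : ℤ):ℝ) ((s₂ + u*P + 1 : ℤ):ℝ) ∧
          M*x ∉ Ioo ((s₃ + u*P : ℤ):ℝ) ((s₃ + u*P + 1 : ℤ):ℝ) := by
        intro u
        refine ⟨fun hm => hx (Or.inl (Or.inl ⟨u, (hIooiff s₁ u).mpr hm⟩)),
          fun hm => hx (Or.inl (Or.inr ⟨u, (hIooiff s₂ u).mpr hm⟩)),
          fun hm => hx (Or.inr ⟨u, (hIooiff s₃ u).mpr hm⟩)⟩
      obtain ⟨u, hcase⟩ := hcore.mpr hall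
      have hu0 := Int.emod_nonneg u (by omega : Q ≠ 0)
      have hu1 := Int.emod_lt_of_pos u hQpos
      have hdiv := Int.mul_ediv_add_emod u Q
      have hAAval : ∀ (k r : ℕ), r < 3 → ∀ hk : 3*k + r < 3 * d ^ n,
          AA ⟨3*k + r, hk⟩ = SS s₁ s₂ s₃ r + 1 + (k:ℤ)*P ∧
          BB ⟨3*k + r, hk⟩ = NX s₁ s₂ s₃ P r + (k:ℤ)*P := by
        intro k r hr hk
        have e1 : (3*k + r) % 3 = r := by omega
        have e2 : (3*k + r) / 3 = k := by omega
        rw [hAA, hBB]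
        simp [e1, e2]
      rcases hcase with hm | hm | hm
      · obtain ⟨hA', hB'⟩ := hAAval (u % Q).toNat 0 (by norm_num) (by omega)
        refine ⟨⟨3*(u % Q).toNat + 0, by omega⟩, u / Q, (hmemIcc _ _).mpr ?_⟩
        rw [hA', hB', Int.toNat_of_nonneg hu0, hSS0, hNX0,
          show s₁ + 1 + (u % Q)*P + (u/Q)*(P*Q) = s₁ + u*P + 1 from by linear_combination P * hdiv,
          show s₂ + (u % Q)*P + (u/Q)*(P*Q) = s₂ + u*P from by linear_combination P * hdiv]
        exact hm
      · obtain ⟨hA', hB'⟩ := hAAval (u % Q).toNat 1 (by norm_num) (by omega)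
        refine ⟨⟨3*(u % Q).toNat + 1, by omega⟩, u / Q, (hmemIcc _ _).mpr ?_⟩
        rw [hA', hB', Int.toNat_of_nonneg hu0, hSS1, hNX1,
          show s₂ + 1 + (u % Q)*P + (u/Q)*(P*Q) = s₂ + u*P + 1 from by linear_combination P * hdiv,
          show s₃ + (u % Q)*P + (u/Q)*(P*Q) = s₃ + u*P from by linear_combination P * hdiv]
        exact hm
      · obtain ⟨hA', hB'⟩ := hAAval (u % Q).toNat 2 (by norm_num) (by omega)
        refine ⟨⟨3*(u % Q).toNat + 2, by omega⟩, u / Q, (hmemIcc _ _).mpr ?_⟩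
        rw [hA', hB', Int.toNat_of_nonneg hu0, hSS2, hNX2,
          show s₃ + 1 + (u % Q)*P + (u/Q)*(P*Q) = s₃ + u*P + 1 from by linear_combination P * hdiv,
          show s₁ + P + (u % Q)*P + (u/Q)*(P*Q) = s₁ + (u+1)*P from by linear_combination P * hdiv]
        exact hm
    · rintro ⟨i, t, hmem⟩ hbad
      have h2 := (hmemIcc i t).mp hmem
      rw [hAA, hBB] at h2
      simp only at h2
      have hex : ∃ u : ℤ,
          M*x ∈ Icc ((s₁ + u*P + 1 : ℤ):ℝ) ((s₂ + u*P : ℤ):ℝ) ∨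
          M*x ∈ Icc ((s₂ + u*P + 1 : ℤ):ℝ) ((s₃ + u*P : ℤ):ℝ) ∨
          M*x ∈ Icc ((s₃ + u*P + 1 : ℤ):ℝ) ((s₁ + (u+1)*P : ℤ):ℝ) := by
        refine ⟨((i.val / 3 : ℕ) : ℤ) + t*Q, ?_⟩
        have hr3 : i.val % 3 = 0 ∨ i.val % 3 = 1 ∨ i.val % 3 = 2 := by omega
        rcases hr3 with hr | hr | hr
        · left
          rw [hr, hSS0, hNX0] at h2
          rw [show s₁ + (((i.val / 3 : ℕ) : ℤ) + t*Q)*P + 1 = s₁ + 1 + ((i.val / 3 : ℕ) : ℤ)*P + t*(P*Q) from by ring,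
            show s₂ + (((i.val / 3 : ℕ) : ℤ) + t*Q)*P = s₂ + ((i.val / 3 : ℕ) : ℤ)*P + t*(P*Q) from by ring]
          exact h2
        · right; left
          rw [hr, hSS1, hNX1] at h2
          rw [show s₂ + (((i.val / 3 : ℕ) : ℤ) + t*Q)*P + 1 = s₂ + 1 + ((i.val / 3 : ℕ) : ℤ)*P + t*(P*Q) from by ring,
            show s₃ + (((i.val / 3 : ℕ) : ℤ) + t*Q)*P = s₃ + ((i.val / 3 : ℕ) : ℤ)*P + t*(P*Q) from by ring]
          exact h2
        · right; right
          rw [hr, hSS2, hNX2] at h2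
          rw [show s₃ + (((i.val / 3 : ℕ) : ℤ) + t*Q)*P + 1 = s₃ + 1 + ((i.val / 3 : ℕ) : ℤ)*P + t*(P*Q) from by ring,
            show s₁ + ((((i.val / 3 : ℕ) : ℤ) + t*Q)+1)*P = s₁ + P + ((i.val / 3 : ℕ) : ℤ)*P + t*(P*Q) from by ring]
          exact h2
      have hall := hcore.mp hex
      rcases hbad with (⟨u, hm⟩ | ⟨u, hm⟩) | ⟨u, hm⟩
      · exact (hall u).1 ((hIooiff s₁ u).mp hm)
      · exact (hall u).2.1 ((hIooiff s₂ u).mp hm)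
      · exact (hall u).2.2 ((hIooiff s₃ u).mp hm)
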